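/- Let F be a field, n coprime to char F, α ∈ F with ord(α)=n, A = F[x]/(x^n−1), σ(x)=αx, and ε_k the primitive idempotents. Then for 1 ≤ δ ≤ n, in A[z;σ]: (1+zε_{n−1})(1+zε_{n−2})⋯(1+zε_{n−δ}) = 1 + z Σ_{k=n−δ}^{n−1} ε_k + z^2 Σ_{k=n−δ}^{n−2} ε_k + … + z^δ Σ_{k=n−δ}^{n−δ} ε_k, and ε_0 times this product equals ε_0 Σ_{ν=0}^{δ} z^ν. -/

import Mathlib

open Polynomial

/-- The quotient ring `A = F[x]/(x^n - 1)`. -/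
abbrev ringA (F : Type*) [Field F] (n : ℕ) :=
  Polynomial F ⧸ Ideal.span {(Polynomial.X : Polynomial F) ^ n - 1}

/-- Multiplication in the skew polynomial ring `A[z;σ]` with commutation rule
`a z = z σ(a)`, written on coefficient sequences: for `f = Σ z^i f_i` and
`g = Σ z^t g_t`, the coefficient of `z^m` in `f·g` is `Σ_{i+t=m} σ^t(f_i) g_t`. -/
noncomputable def skewMul {A : Type*} [Ring A] (σ : A → A) (f g : ℕ → A) : ℕ → A :=
  fun m => ∑ t ∈ Finset.range (m + 1), σ^[t] (f (m - t)) * g t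

/-- The identity element `1` of `A[z;σ]` as a coefficient sequence. -/
noncomputable def skewOne (A : Type*) [Ring A] : ℕ → A :=
  fun m => if m = 0 then 1 else 0

lemma aux_dvd {F : Type*} [Field F] {n : ℕ} (hn0 : 0 < n) {α : F} (h : IsPrimitiveRoot α n)
    {d : Polynomial F} (hd : ∀ i < n, d.eval (α ^ i) = 0) :
    ((X : Polynomial F) ^ n - 1) ∣ d := by
  rcases eq_or_ne d 0 with rfl | hd0
  · simp
  haveI : NeZero n := ⟨hn0.ne'⟩
  classical
  rw [Polynomial.X_pow_sub_one_eq_prod hn0 h]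
  have hroot : ∀ a ∈ Polynomial.nthRootsFinset n (1 : F), d.IsRoot a := by
    intro a ha
    obtain ⟨i, hin, rfl⟩ := h.eq_pow_of_pow_eq_one ((Polynomial.mem_nthRootsFinset hn0 (1 : F)).1 ha)
    exact hd i hin
  have hle : (Polynomial.nthRootsFinset n (1 : F)).val ≤ d.roots := by
    rw [Multiset.le_iff_count]
    intro a
    by_cases ha : a ∈ Polynomial.nthRootsFinset n (1 : F)
    · have h1 : (Polynomial.nthRootsFinset n (1 : F)).val.count a = 1 :=
        Multiset.count_eq_one_of_mem (Polynomial.nthRootsFinset n (1 : F)).nodup ha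
      rw [h1]
      rw [Nat.one_le_iff_ne_zero, Ne, Multiset.count_eq_zero, not_not,
        Polynomial.mem_roots hd0]
      exact hroot a ha
    · rw [Multiset.count_eq_zero_of_notMem ha]
      exact Nat.zero_le _
  calc ∏ ζ ∈ Polynomial.nthRootsFinset n (1 : F), (X - C ζ)
      = ((Polynomial.nthRootsFinset n (1 : F)).val.map fun a => X - C a).prod := by
        rw [Finset.prod_eq_multiset_prod]
    _ ∣ (d.roots.map fun a => X - C a).prod :=
        Multiset.prod_dvd_prod_of_le (Multiset.map_le_map hle)
    _ ∣ d := Polynomial.prod_multiset_X_sub_C_dvd d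

lemma aux_mk_eq {F : Type*} [Field F] {n : ℕ} (hn0 : 0 < n) {α : F} (h : IsPrimitiveRoot α n)
    {p q : Polynomial F} (hpq : ∀ i < n, p.eval (α ^ i) = q.eval (α ^ i)) :
    Ideal.Quotient.mk (Ideal.span {(X : Polynomial F) ^ n - 1}) p =
      Ideal.Quotient.mk (Ideal.span {(X : Polynomial F) ^ n - 1}) q := by
  rw [Ideal.Quotient.eq, Ideal.mem_span_singleton]
  exact aux_dvd hn0 h (fun i hi => by simp [hpq i hi])

lemma aux_sigma {F : Type*} [Field F] {n : ℕ} (α : F)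
    (σ : ringA F n ≃ₐ[F] ringA F n)
    (hσ : σ (Ideal.Quotient.mk (Ideal.span {Polynomial.X ^ n - 1}) Polynomial.X)
        = Ideal.Quotient.mk (Ideal.span {Polynomial.X ^ n - 1})
            (Polynomial.C α * Polynomial.X)) (p : Polynomial F) :
    σ (Ideal.Quotient.mk (Ideal.span {(X : Polynomial F) ^ n - 1}) p)
      = Ideal.Quotient.mk (Ideal.span {(X : Polynomial F) ^ n - 1})
          (p.comp (C α * X)) := by
  have key : (σ.toAlgHom.comp (Ideal.Quotient.mkₐ F (Ideal.span {(X : Polynomial F) ^ n - 1})))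
      = (Ideal.Quotient.mkₐ F (Ideal.span {(X : Polynomial F) ^ n - 1})).comp
          (Polynomial.aeval (C α * X)) := by
    apply Polynomial.algHom_ext
    simpa using hσ
  have := AlgHom.congr_fun key p
  simpa [Polynomial.comp_eq_aeval] using this

/-- With `A = F[x]/(x^n - 1)`, `n` coprime to `char F`, `ord(α) = n`,
`σ(x) = αx`, and `ε_0, …, ε_{n-1}` the primitive idempotents (classes of polynomials
`e k` of degree `< n` with `(e k)(α^i) = δ_{k,i}`), one has in `A[z;σ]`, for `1 ≤ δ ≤ n`:
`(1 + zε_{n-1})(1 + zε_{n-2})⋯(1 + zε_{n-δ})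
  = 1 + z Σ_{k=n-δ}^{n-1} ε_k + z² Σ_{k=n-δ}^{n-2} ε_k + … + z^δ Σ_{k=n-δ}^{n-δ} ε_k`,
and `ε_0` times this product equals `ε_0 Σ_{ν=0}^{δ} z^ν`. -/
theorem stmt18 (F : Type*) [Field F] (n : ℕ) (hn0 : 0 < n) (α : F)
    (hord : orderOf α = n) (hn : (n : F) ≠ 0)
    (e : ℕ → Polynomial F)
    (hdeg : ∀ k < n, (e k).degree < n)
    (heval : ∀ k < n, ∀ i < n, Polynomial.eval (α ^ i) (e k) = if i = k then 1 else 0)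
    (σ : ringA F n ≃ₐ[F] ringA F n)
    (hσ : σ (Ideal.Quotient.mk (Ideal.span {Polynomial.X ^ n - 1}) Polynomial.X)
        = Ideal.Quotient.mk (Ideal.span {Polynomial.X ^ n - 1})
            (Polynomial.C α * Polynomial.X))
    (δ : ℕ) (hδ1 : 1 ≤ δ) (hδn : δ ≤ n) :
    (((List.range δ).map (fun t => (fun m' => if m' = 0 then 1 else if m' = 1 then
        Ideal.Quotient.mk (Ideal.span {Polynomial.X ^ n - 1}) (e (n - (t + 1)))
      else 0 : ℕ → ringA F n))).foldr (skewMul ⇑σ) (skewOne (ringA F n)))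
      = (fun m => if m = 0 then 1 else if m ≤ δ then
          ∑ k ∈ Finset.Icc (n - δ) (n - m),
            Ideal.Quotient.mk (Ideal.span {Polynomial.X ^ n - 1}) (e k)
        else 0) ∧
    skewMul ⇑σ
        (fun m => if m = 0 then
          Ideal.Quotient.mk (Ideal.span {Polynomial.X ^ n - 1}) (e 0) else 0)
        (((List.range δ).map (fun t => (fun m' => if m' = 0 then 1 else if m' = 1 then
            Ideal.Quotient.mk (Ideal.span {Polynomial.X ^ n - 1}) (e (n - (t + 1)))
          else 0 : ℕ → ringA F n))).foldr (skewMul ⇑σ) (skewOne (ringA F n)))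
      = skewMul ⇑σ
          (fun m => if m = 0 then
            Ideal.Quotient.mk (Ideal.span {Polynomial.X ^ n - 1}) (e 0) else 0)
          (fun m => if m ≤ δ then 1 else 0) := by
  classical
  have hprim : IsPrimitiveRoot α n := hord ▸ IsPrimitiveRoot.orderOf α
  have hα1 : α ^ n = 1 := hord ▸ pow_orderOf_eq_one α
  obtain ⟨ε, hε⟩ : ∃ ε : ℕ → ringA F n, ∀ k,
      Ideal.Quotient.mk (Ideal.span {(X : Polynomial F) ^ n - 1}) (e k) = ε k :=
    ⟨_, fun k => rfl⟩
  have K1 : ∀ j k, j < n → k < n → ε j * ε k = if j = k then ε j else 0 := by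
    intro j k hj hk
    rw [← hε, ← hε, ← map_mul]
    by_cases hjk : j = k
    · subst hjk
      rw [if_pos rfl]
      apply aux_mk_eq hn0 hprim
      intro i hi
      rw [Polynomial.eval_mul, heval j hj i hi]
      by_cases hij : i = j <;> simp [hij]
    · rw [if_neg hjk]
      have h0 : Ideal.Quotient.mk (Ideal.span {(X : Polynomial F) ^ n - 1}) (e j * e k)
          = Ideal.Quotient.mk (Ideal.span {(X : Polynomial F) ^ n - 1}) 0 := by
        apply aux_mk_eq hn0 hprim
        intro i hi
        rw [Polynomial.eval_mul, heval j hj i hi, heval k hk i hi]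
        by_cases hij : i = j <;> by_cases hik : i = k <;> simp_all
      rwa [map_zero] at h0
  have K2a : ∀ k, 1 ≤ k → k < n → σ (ε k) = ε (k - 1) := by
    intro k hk1 hkn
    rw [← hε, ← hε, aux_sigma α σ hσ]
    apply aux_mk_eq hn0 hprim
    intro i hi
    rw [Polynomial.eval_comp]
    have hev : Polynomial.eval (α ^ i) (C α * X) = α ^ (i + 1) := by
      rw [Polynomial.eval_mul, Polynomial.eval_C, Polynomial.eval_X, pow_succ, mul_comm]
    rw [hev]
    rcases lt_or_eq_of_le (show i + 1 ≤ n from hi) with hi1 | hi1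
    · rw [heval k hkn (i + 1) hi1, heval (k - 1) (by omega) i hi]
      by_cases h : i + 1 = k
      · rw [if_pos h, if_pos (show i = k - 1 by omega)]
      · rw [if_neg h, if_neg (show ¬ i = k - 1 by omega)]
    · have h0 : α ^ (i + 1) = α ^ 0 := by rw [hi1, hα1, pow_zero]
      rw [h0, heval k hkn 0 hn0, heval (k - 1) (by omega) i hi]
      rw [if_neg (show ¬ (0 = k) by omega), if_neg (show ¬ i = k - 1 by omega)]
  have K2b : σ (ε 0) = ε (n - 1) := by
    rw [← hε, ← hε, aux_sigma α σ hσ]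
    apply aux_mk_eq hn0 hprim
    intro i hi
    rw [Polynomial.eval_comp]
    have hev : Polynomial.eval (α ^ i) (C α * X) = α ^ (i + 1) := by
      rw [Polynomial.eval_mul, Polynomial.eval_C, Polynomial.eval_X, pow_succ, mul_comm]
    rw [hev]
    rcases lt_or_eq_of_le (show i + 1 ≤ n from hi) with hi1 | hi1
    · rw [heval 0 hn0 (i + 1) hi1, heval (n - 1) (by omega) i hi]
      rw [if_neg (show ¬ (i + 1 = 0) by omega), if_neg (show ¬ i = n - 1 by omega)]
    · have h0 : α ^ (i + 1) = α ^ 0 := by rw [hi1, hα1, pow_zero]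
      rw [h0, heval 0 hn0 0 hn0, heval (n - 1) (by omega) i hi]
      rw [if_pos rfl, if_pos (show i = n - 1 by omega)]
  have K2' : ∀ t k, t ≤ k → k < n → (⇑σ)^[t] (ε k) = ε (k - t) := by
    intro t
    induction t with
    | zero => intro k _ _; simp
    | succ t ih =>
      intro k htk hkn
      rw [Function.iterate_succ_apply, K2a k (by omega) hkn, ih (k - 1) (by omega) (by omega)]
      congr 1
      omega
  have hit0 : ∀ t, (⇑σ)^[t] (0 : ringA F n) = 0 := fun t => Function.iterate_fixed (map_zero σ) t
  have hit1 : ∀ t, (⇑σ)^[t] (1 : ringA F n) = 1 := fun t => Function.iterate_fixed (map_one σ) t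
  simp only [hε]
  have main : ∀ l s, s + l ≤ n →
      (((List.range l).map (fun t => (fun m' => if m' = 0 then 1 else if m' = 1 then
          ε (n - (s + t + 1)) else 0 : ℕ → ringA F n))).foldr (skewMul ⇑σ) (skewOne (ringA F n)))
        = fun m => if m = 0 then 1 else if m ≤ l then
            ∑ k ∈ Finset.Icc (n - s - l) (n - s - m), ε k else 0 := by
    intro l
    induction l with
    | zero =>
      intro s _
      funext m
      simp only [List.range_zero, List.map_nil, List.foldr_nil, skewOne]
      by_cases hm : m = 0 <;> simp [hm]
    | succ l ih =>
      intro s hsl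
      rw [List.range_succ_eq_map, List.map_cons, List.map_map]
      have hcomp : ((fun t => (fun m' => if m' = 0 then 1 else if m' = 1 then
          ε (n - (s + t + 1)) else 0 : ℕ → ringA F n)) ∘ Nat.succ)
          = (fun t => (fun m' => if m' = 0 then 1 else if m' = 1 then
          ε (n - ((s + 1) + t + 1)) else 0 : ℕ → ringA F n)) := by
        funext t m'
        have harith : s + Nat.succ t + 1 = (s + 1) + t + 1 := by omega
        rw [Function.comp_apply, harith]
      rw [hcomp, List.foldr_cons, ih (s + 1) (by omega)]
      funext m
      simp only [skewMul]
      cases m with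
      | zero =>
        simp
      | succ m' =>
        rw [Finset.sum_range_succ, Finset.sum_range_succ]
        have hrest : ∀ t ∈ Finset.range m', σ^[t]
            (if m' + 1 - t = 0 then 1 else if m' + 1 - t = 1 then ε (n - (s + 0 + 1)) else 0)
            * (if t = 0 then 1 else if t ≤ l then
                ∑ k ∈ Finset.Icc (n - (s + 1) - l) (n - (s + 1) - t), ε k else 0) = 0 := by
          intro t ht
          rw [Finset.mem_range] at ht
          rw [if_neg (by omega), if_neg (by omega), hit0, zero_mul]
        rw [Finset.sum_eq_zero hrest, zero_add]
        rw [show m' + 1 - m' = 1 from by omega, show m' + 1 - (m' + 1) = 0 from by omega]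
        rw [if_neg (by omega), if_pos rfl, if_pos rfl, hit1, one_mul]
        rw [show n - (s + 0 + 1) = n - s - 1 from by omega]
        rw [if_neg (show ¬ (m' + 1 = 0) by omega)]
        rw [if_neg (show ¬ (m' + 1 = 0) by omega)]
        by_cases hml : m' ≤ l
        · rw [K2' m' (n - s - 1) (by omega) (by omega)]
          by_cases hm0 : m' = 0
          · subst hm0
            rw [if_pos rfl, mul_one, Nat.sub_zero, if_pos (show 0 + 1 ≤ l + 1 by omega)]
            by_cases hl0 : l = 0
            · subst hl0
              rw [if_neg (by omega), add_zero]
              rw [show n - s - (0 + 1) = n - s - 1 from by omega]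
              rw [show n - s - (0 + 1) = n - s - 1 from by omega]
              rw [Finset.Icc_self, Finset.sum_singleton]
            · rw [if_pos (show 0 + 1 ≤ l by omega)]
              rw [show n - s - (l + 1) = n - s - 1 - l from by omega,
                show n - s - (0 + 1) = (n - s - 1 - (0 + 1)) + 1 from by omega,
                Finset.sum_Icc_succ_top (by omega),
                show (n - s - 1 - (0 + 1)) + 1 = n - s - 1 from by omega]
              exact add_comm _ _
          · rw [if_neg hm0, if_pos hml, Finset.mul_sum]
            have hpick : ∀ k ∈ Finset.Icc (n - s - 1 - l) (n - s - 1 - m'),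
                ε (n - s - 1 - m') * ε k
                  = if n - s - 1 - m' = k then ε (n - s - 1 - m') else 0 := by
              intro k hk
              rw [Finset.mem_Icc] at hk
              exact K1 _ _ (by omega) (by omega)
            rw [Finset.sum_congr rfl hpick, Finset.sum_ite_eq,
              if_pos (by rw [Finset.mem_Icc]; omega)]
            by_cases hml' : m' + 1 ≤ l
            · rw [if_pos hml', if_pos (show m' + 1 ≤ l + 1 by omega)]
              rw [show n - s - (l + 1) = n - s - 1 - l from by omega,
                show n - s - (m' + 1) = (n - s - 1 - (m' + 1)) + 1 from by omega,
                Finset.sum_Icc_succ_top (by omega),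
                show (n - s - 1 - (m' + 1)) + 1 = n - s - 1 - m' from by omega]
              exact add_comm _ _
            · rw [if_neg hml', add_zero, if_pos (show m' + 1 ≤ l + 1 by omega)]
              rw [show n - s - (l + 1) = n - s - 1 - m' from by omega,
                show n - s - (m' + 1) = n - s - 1 - m' from by omega,
                Finset.Icc_self, Finset.sum_singleton]
        · rw [if_neg (show ¬ (m' = 0) by omega), if_neg hml, mul_zero, zero_add,
            if_neg (show ¬ (m' + 1 ≤ l) by omega), if_neg (show ¬ (m' + 1 ≤ l + 1) by omega)]
  have part1 := main δ 0 (by omega)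
  simp only [Nat.zero_add, zero_add, Nat.sub_zero] at part1
  refine ⟨part1, ?_⟩
  rw [part1]
  funext m
  simp only [skewMul]
  have hsingle : ∀ (g : ℕ → ringA F n), (∑ t ∈ Finset.range (m + 1),
      (⇑σ)^[t] (if m - t = 0 then ε 0 else 0) * g t) = (⇑σ)^[m] (ε 0) * g m := by
    intro g
    rw [Finset.sum_eq_single m]
    · rw [Nat.sub_self, if_pos rfl]
    · intro t ht htm
      rw [Finset.mem_range] at ht
      rw [if_neg (by omega), hit0, zero_mul]
    · intro h
      exact absurd (Finset.self_mem_range_succ m) h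
  rw [hsingle, hsingle]
  by_cases hm0 : m = 0
  · subst hm0
    rw [if_pos rfl, if_pos (show (0:ℕ) ≤ δ by omega)]
  · by_cases hmδ : m ≤ δ
    · rw [if_neg hm0, if_pos hmδ, if_pos hmδ]
      have hiter : (⇑σ)^[m] (ε 0) = ε (n - m) := by
        rw [show m = (m - 1) + 1 from by omega, Function.iterate_succ_apply, K2b,
          K2' (m - 1) (n - 1) (by omega) (by omega)]
        congr 1
        omega
      rw [hiter, mul_one, Finset.mul_sum]
      have hpick : ∀ k ∈ Finset.Icc (n - δ) (n - m),
          ε (n - m) * ε k = if n - m = k then ε (n - m) else 0 := by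
        intro k hk
        rw [Finset.mem_Icc] at hk
        exact K1 _ _ (by omega) (by omega)
      rw [Finset.sum_congr rfl hpick, Finset.sum_ite_eq]
      rw [if_pos (by rw [Finset.mem_Icc]; omega)]
    · rw [if_neg hm0, if_neg hmδ, if_neg hmδ, mul_zero]
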